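/- Let n ≥ 1, let K be a finite simplicial complex on V all of whose faces have at most n + 1 elements, and let (α, β) be a bistellar pair of type h in K (viewed as n-dimensional). Then the following are equivalent: (1) f_i(bm_α K) = f_i(K) for every i ≤ n; (2) f_n(bm_α K) = f_n(K); (3) f_{n−1}(bm_α K) = f_{n−1}(K); (4) n = 2h. -/

import Mathlib

open Finset

variable {V : Type*} [DecidableEq V]

/-- An abstract simplicial complex: a set of finsets closed under taking subsets. -/
def IsSimplicialComplex (K : Set (Finset V)) : Prop :=
  ∀ S ∈ K, ∀ T ⊆ S, T ∈ K

/-- The boundary complex `∂s` of a finset `s`: all proper subsets of `s`. -/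
def bdry (s : Finset V) : Set (Finset V) := {T | T ⊂ s}

/-- The join `α * ∂β = {γ ∪ δ : γ ⊆ α, δ ⊊ β}` (this is `Λ_α`). -/
def joinSB (α β : Finset V) : Set (Finset V) :=
  {S | ∃ γ δ : Finset V, γ ⊆ α ∧ δ ⊂ β ∧ S = γ ∪ δ}

/-- The join `∂α * β = {γ ∪ δ : γ ⊊ α, δ ⊆ β}` (this is `Λ_β`). -/
def joinBS (α β : Finset V) : Set (Finset V) :=
  {S | ∃ γ δ : Finset V, γ ⊂ α ∧ δ ⊆ β ∧ S = γ ∪ δ}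

/-- The link of a face `α` in `K`. -/
def linkOf (K : Set (Finset V)) (α : Finset V) : Set (Finset V) :=
  {γ | γ ∩ α = ∅ ∧ γ ∪ α ∈ K}

/-- `(α, β)` is a bistellar pair of type `h` in `K`, viewed as `n`-dimensional. -/
def IsBistellarPair (K : Set (Finset V)) (n h : ℕ) (α β : Finset V) : Prop :=
  α ∈ K ∧ α.card = n - h + 1 ∧ β.card = h + 1 ∧ α ∩ β = ∅ ∧ β ∉ K ∧
    linkOf K α = bdry β

/-- The bistellar move `bm_α K = (K \ (α * ∂β)) ∪ (∂α * β)`. -/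
def bm (K : Set (Finset V)) (α β : Finset V) : Set (Finset V) :=
  (K \ joinSB α β) ∪ joinBS α β

/-- The `i`-th entry of the f-vector: the number of `i`-dimensional faces of `K`. -/
noncomputable def fvec (K : Set (Finset V)) (i : ℕ) : ℕ := {S ∈ K | S.card = i + 1}.ncard

/-- The set of `(n-1)`-dimensional faces of a complex `Λ` (members with `n` elements). -/
def faceSet (Λ : Set (Finset V)) (n : ℕ) : Set (Finset V) := {S ∈ Λ | S.card = n}


lemma between_ncard (a b : Finset V) (hab : Disjoint a b) (j : ℕ) :
    {S : Finset V | a ⊆ S ∧ S ⊆ a ∪ b ∧ S.card = a.card + j}.ncard = b.card.choose j := by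
  have heq : {S : Finset V | a ⊆ S ∧ S ⊆ a ∪ b ∧ S.card = a.card + j}
      = ↑((b.powersetCard j).image (fun δ => a ∪ δ)) := by
    ext S
    simp only [Set.mem_setOf_eq, coe_image, Set.mem_image, mem_coe, mem_powersetCard]
    constructor
    · rintro ⟨h1, h2, h3⟩
      refine ⟨S \ a, ⟨?_, ?_⟩, ?_⟩
      · intro x hx
        simp only [Finset.mem_sdiff] at hx
        have := h2 hx.1
        simp only [Finset.mem_union] at this
        tauto
      · have := Finset.card_sdiff_of_subset h1; omega
      · rw [Finset.union_sdiff_of_subset h1]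
    · rintro ⟨δ, ⟨hδb, hδc⟩, rfl⟩
      exact ⟨Finset.subset_union_left, Finset.union_subset_union_right hδb,
        by rw [Finset.card_union_of_disjoint (hab.mono_right hδb), hδc]⟩
  rw [heq, Set.ncard_coe_finset, Finset.card_image_of_injOn, Finset.card_powersetCard]
  intro x hx y hy hxy
  simp only [mem_coe, mem_powersetCard] at hx hy
  have e1 : (a ∪ x) \ a = x := Finset.union_sdiff_cancel_left (hab.mono_right hx.1)
  have e2 : (a ∪ y) \ a = y := Finset.union_sdiff_cancel_left (hab.mono_right hy.1)
  have hxy' : a ∪ x = a ∪ y := hxy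
  rw [← e1, ← e2, hxy']

lemma choose_two_inj {a b : ℕ} (ha : 1 ≤ a) (hb : 1 ≤ b) (h : a.choose 2 = b.choose 2) :
    a = b := by
  rcases Nat.exists_eq_add_of_le ha with ⟨a', rfl⟩
  rcases Nat.exists_eq_add_of_le hb with ⟨b', rfl⟩
  rw [Nat.choose_two_right, Nat.choose_two_right,
    show 1 + a' - 1 = a' from by omega, show 1 + b' - 1 = b' from by omega,
    show (1 + a') * a' = a' * (a' + 1) from by ring,
    show (1 + b') * b' = b' * (b' + 1) from by ring] at h
  obtain ⟨p, hp⟩ := Nat.even_mul_succ_self a'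
  obtain ⟨q, hq⟩ := Nat.even_mul_succ_self b'
  rw [hp, hq] at h
  have : a' * (a' + 1) = b' * (b' + 1) := by omega
  have : a' = b' := by nlinarith [this]
  omega

lemma bm_decomp (K : Set (Finset V)) (hK : IsSimplicialComplex K)
    (n h : ℕ) (α β : Finset V) (hpair : IsBistellarPair K n h α β) :
    bm K α β = (K \ {S : Finset V | α ⊆ S ∧ S ⊂ α ∪ β}) ∪ {S : Finset V | β ⊆ S ∧ S ⊂ α ∪ β} ∧
    {S : Finset V | α ⊆ S ∧ S ⊂ α ∪ β} ⊆ K ∧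
    Disjoint {S : Finset V | β ⊆ S ∧ S ⊂ α ∪ β} K := by
  obtain ⟨hαK, hcα, hcβ, hαβ, hβK, hlink⟩ := hpair
  have hdisj : Disjoint α β := Finset.disjoint_left.mpr (by
    intro x hxα hxβ
    have : x ∈ α ∩ β := Finset.mem_inter.mpr ⟨hxα, hxβ⟩
    rw [hαβ] at this; exact absurd this (Finset.notMem_empty x))
  -- key: proper subsets of β joined with α are in K
  have hprop : ∀ δ : Finset V, δ ⊂ β → α ∪ δ ∈ K := by
    intro δ hδ
    have : δ ∈ linkOf K α := by rw [hlink]; exact hδ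
    rw [Finset.union_comm]
    exact this.2
  -- Rem ⊆ K
  have hRem : {S : Finset V | α ⊆ S ∧ S ⊂ α ∪ β} ⊆ K := by
    rintro S ⟨h1, h2⟩
    have hSeq : S = α ∪ (S ∩ β) := by
      apply Finset.Subset.antisymm
      · intro x hx
        rcases Finset.mem_union.mp (h2.subset hx) with hx' | hx'
        · exact Finset.mem_union_left _ hx'
        · exact Finset.mem_union_right _ (Finset.mem_inter.mpr ⟨hx, hx'⟩)
      · exact Finset.union_subset h1 Finset.inter_subset_left
    have hsb : S ∩ β ⊂ β := by
      refine Finset.ssubset_iff_subset_ne.mpr ⟨Finset.inter_subset_right, ?_⟩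
      intro he
      apply h2.ne
      apply Finset.Subset.antisymm h2.subset
      rw [hSeq, he]
    rw [hSeq]; exact hprop _ hsb
  -- Add disjoint from K
  have hAdd : Disjoint {S : Finset V | β ⊆ S ∧ S ⊂ α ∪ β} K := by
    rw [Set.disjoint_left]
    rintro S ⟨h1, _⟩ hSK
    exact hβK (hK S hSK β h1)
  refine ⟨?_, hRem, hAdd⟩
  ext S
  constructor
  · rintro (⟨hSK, hSnΛ⟩ | ⟨γ, δ, hγ, hδ, rfl⟩)
    · left
      refine ⟨hSK, fun ⟨h1, h2⟩ => hSnΛ ?_⟩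
      have hSeq : S = α ∪ (S ∩ β) := by
        apply Finset.Subset.antisymm
        · intro x hx
          rcases Finset.mem_union.mp (h2.subset hx) with hx' | hx'
          · exact Finset.mem_union_left _ hx'
          · exact Finset.mem_union_right _ (Finset.mem_inter.mpr ⟨hx, hx'⟩)
        · exact Finset.union_subset h1 Finset.inter_subset_left
      have hsb : S ∩ β ⊂ β := by
        refine Finset.ssubset_iff_subset_ne.mpr ⟨Finset.inter_subset_right, ?_⟩
        intro he
        apply h2.ne
        apply Finset.Subset.antisymm h2.subset
        rw [hSeq, he]
      exact ⟨α, S ∩ β, Finset.Subset.refl _, hsb, hSeq⟩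
    · -- S = γ ∪ δ with γ ⊂ α, δ ⊆ β
      obtain ⟨x, hxα, hxγ⟩ := Finset.exists_of_ssubset hγ
      have hxδ : x ∉ δ := fun hx => Finset.disjoint_left.mp hdisj hxα (hδ hx)
      have hxS : x ∉ γ ∪ δ := by simp [hxγ, hxδ]
      have hsub : γ ∪ δ ⊆ α ∪ β := Finset.union_subset_union hγ.subset hδ
      have hss : γ ∪ δ ⊂ α ∪ β :=
        Finset.ssubset_iff_subset_ne.mpr ⟨hsub, fun he => hxS (he ▸ Finset.mem_union_left _ hxα)⟩
      by_cases hb : β ⊆ γ ∪ δ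
      · right; exact ⟨hb, hss⟩
      · left
        have hδ' : (γ ∪ δ) ∩ β ⊂ β := by
          refine Finset.ssubset_iff_subset_ne.mpr ⟨Finset.inter_subset_right, ?_⟩
          intro he
          exact hb (by rw [← he]; exact Finset.inter_subset_left)
        have hmem : α ∪ ((γ ∪ δ) ∩ β) ∈ K := hprop _ hδ'
        have hSsub : γ ∪ δ ⊆ α ∪ ((γ ∪ δ) ∩ β) := by
          intro x hx
          rcases Finset.mem_union.mp hx with hx' | hx'
          · exact Finset.mem_union_left _ (hγ.subset hx')
          · exact Finset.mem_union_right _ (Finset.mem_inter.mpr ⟨Finset.mem_union_right _ hx', hδ hx'⟩)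
        refine ⟨hK _ hmem _ hSsub, ?_⟩
        rintro ⟨h1, _⟩
        exact hxγ (by
          have := h1 hxα
          rcases Finset.mem_union.mp this with hx' | hx'
          · exact hx'
          · exact absurd (hδ hx') (Finset.disjoint_left.mp hdisj hxα))
  · rintro (⟨hSK, hSnRem⟩ | ⟨h1, h2⟩)
    · by_cases hα' : S ∈ joinSB α β
      · right
        obtain ⟨γ, δ, hγ, hδ, rfl⟩ := hα'
        have hsub : γ ∪ δ ⊆ α ∪ β := Finset.union_subset_union hγ hδ.subset
        have hnb : ¬ β ⊆ γ ∪ δ := by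
          intro hb
          exact hβK (hK _ hSK β hb)
        have hss : γ ∪ δ ⊂ α ∪ β := by
          refine Finset.ssubset_iff_subset_ne.mpr ⟨hsub, ?_⟩
          intro he
          exact hnb (by rw [he]; exact Finset.subset_union_right)
        have hnα : ¬ α ⊆ γ ∪ δ := fun hα2 => hSnRem ⟨hα2, hss⟩
        have hSeq : γ ∪ δ = ((γ ∪ δ) ∩ α) ∪ ((γ ∪ δ) ∩ β) := by
          rw [← Finset.inter_union_distrib_left, Finset.inter_eq_left.mpr hsub]
        refine ⟨(γ ∪ δ) ∩ α, (γ ∪ δ) ∩ β, ?_, Finset.inter_subset_right, hSeq⟩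
        refine Finset.ssubset_iff_subset_ne.mpr ⟨Finset.inter_subset_right, ?_⟩
        intro he
        exact hnα (by rw [← he]; exact Finset.inter_subset_left)
      · left; exact ⟨hSK, hα'⟩
    · right
      have hSeq : S = (S ∩ α) ∪ (S ∩ β) := by
        rw [← Finset.inter_union_distrib_left, Finset.inter_eq_left.mpr h2.subset]
      refine ⟨S ∩ α, S ∩ β, ?_, Finset.inter_subset_right, hSeq⟩
      refine Finset.ssubset_iff_subset_ne.mpr ⟨Finset.inter_subset_right, ?_⟩
      intro he
      apply h2.ne
      apply Finset.Subset.antisymm h2.subset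
      intro x hx
      rcases Finset.mem_union.mp hx with hx' | hx'
      · rw [← he] at hx'; exact (Finset.mem_inter.mp hx').1
      · exact h1 hx'

/-- equivalent characterizations of `n = 2h` via the f-vector. -/
theorem fvec_tfae (K : Set (Finset V)) (hK : IsSimplicialComplex K)
    (hfin : K.Finite) (n h : ℕ) (hn : 1 ≤ n) (hhn : h ≤ n)
    (hdim : ∀ S ∈ K, S.card ≤ n + 1) (α β : Finset V)
    (hpair : IsBistellarPair K n h α β) :
    [(∀ i ≤ n, fvec (bm K α β) i = fvec K i),
     fvec (bm K α β) n = fvec K n,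
     fvec (bm K α β) (n - 1) = fvec K (n - 1),
     n = 2 * h].TFAE := by
  obtain ⟨hbm, hRemK, hAddK⟩ := bm_decomp K hK n h α β hpair
  obtain ⟨hαK, hcα, hcβ, hαβ, hβK, hlink⟩ := hpair
  have hdisj : Disjoint α β := Finset.disjoint_left.mpr (by
    intro x hxα hxβ
    have : x ∈ α ∩ β := Finset.mem_inter.mpr ⟨hxα, hxβ⟩
    rw [hαβ] at this; exact absurd this (Finset.notMem_empty x))
  have hcαβ : (α ∪ β).card = n + 2 := by
    rw [Finset.card_union_of_disjoint hdisj]; omega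
  -- the counting identity
  have hcount : ∀ i ≤ n, fvec (bm K α β) i
        + {S : Finset V | α ⊆ S ∧ S ⊆ α ∪ β ∧ S.card = i + 1}.ncard
      = fvec K i + {S : Finset V | β ⊆ S ∧ S ⊆ α ∪ β ∧ S.card = i + 1}.ncard := by
    intro i hi
    set R : Set (Finset V) := {S : Finset V | α ⊆ S ∧ S ⊆ α ∪ β ∧ S.card = i + 1} with hR
    set A : Set (Finset V) := {S : Finset V | β ⊆ S ∧ S ⊆ α ∪ β ∧ S.card = i + 1} with hA
    set F : Set (Finset V) := {S ∈ K | S.card = i + 1} with hF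
    have hproper : ∀ S : Finset V, S ⊆ α ∪ β → S.card = i + 1 → S ⊂ α ∪ β := by
      intro S h1 h2
      refine Finset.ssubset_iff_subset_ne.mpr ⟨h1, ?_⟩
      intro he; rw [he] at h2; omega
    have hFfin : F.Finite := hfin.subset (fun S hS => hS.1)
    have hRsub : R ⊆ F := by
      rintro S ⟨h1, h2, h3⟩
      exact ⟨hRemK ⟨h1, hproper S h2 h3⟩, h3⟩
    have hAfin : A.Finite := by
      apply (Finset.finite_toSet (α ∪ β).powerset).subset
      rintro S ⟨_, h2, _⟩
      exact Finset.mem_coe.mpr (Finset.mem_powerset.mpr h2)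
    have hAdisj : Disjoint A (F \ R) := by
      rw [Set.disjoint_left]
      rintro S ⟨h1, h2, h3⟩ ⟨⟨hSK, _⟩, _⟩
      exact (Set.disjoint_left.mp hAddK ⟨h1, hproper S h2 h3⟩) hSK
    have hfaces : {S ∈ bm K α β | S.card = i + 1} = (F \ R) ∪ A := by
      rw [hbm]
      ext S
      constructor
      · rintro ⟨(⟨hSK, hSnRem⟩ | ⟨h1, h2⟩), hc⟩
        · exact Or.inl ⟨⟨hSK, hc⟩, fun ⟨h1, h2, _⟩ => hSnRem ⟨h1, hproper S h2 hc⟩⟩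
        · exact Or.inr ⟨h1, h2.subset, hc⟩
      · rintro (⟨⟨hSK, hc⟩, hnR⟩ | ⟨h1, h2, h3⟩)
        · exact ⟨Or.inl ⟨hSK, fun ⟨ha, hb⟩ => hnR ⟨ha, hb.subset, hc⟩⟩, hc⟩
        · exact ⟨Or.inr ⟨h1, hproper S h2 h3⟩, h3⟩
    have h1 : fvec (bm K α β) i = (F \ R).ncard + A.ncard := by
      rw [fvec, hfaces, Set.ncard_union_eq hAdisj.symm hFfin.diff hAfin]
    have h2 : (F \ R).ncard = F.ncard - R.ncard := Set.ncard_diff hRsub (hFfin.subset hRsub)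
    have h3 : R.ncard ≤ F.ncard := Set.ncard_le_ncard hRsub hFfin
    have h4 : fvec K i = F.ncard := rfl
    omega
  -- counting the removed/added faces
  have hRcard : ∀ i : ℕ, α.card ≤ i + 1 →
      {S : Finset V | α ⊆ S ∧ S ⊆ α ∪ β ∧ S.card = i + 1}.ncard
        = (h + 1).choose (i + 1 - α.card) := by
    intro i hi
    rw [show {S : Finset V | α ⊆ S ∧ S ⊆ α ∪ β ∧ S.card = i + 1}
        = {S : Finset V | α ⊆ S ∧ S ⊆ α ∪ β ∧ S.card = α.card + (i + 1 - α.card)} from by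
      rw [show α.card + (i + 1 - α.card) = i + 1 from by omega],
      between_ncard α β hdisj, hcβ]
  have hAcard : ∀ i : ℕ, β.card ≤ i + 1 →
      {S : Finset V | β ⊆ S ∧ S ⊆ α ∪ β ∧ S.card = i + 1}.ncard
        = (n - h + 1).choose (i + 1 - β.card) := by
    intro i hi
    rw [show {S : Finset V | β ⊆ S ∧ S ⊆ α ∪ β ∧ S.card = i + 1}
        = {S : Finset V | β ⊆ S ∧ S ⊆ β ∪ α ∧ S.card = β.card + (i + 1 - β.card)} from by
      rw [show β.card + (i + 1 - β.card) = i + 1 from by omega, Finset.union_comm α β],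
      between_ncard β α hdisj.symm, hcα]
  have hRzero : ∀ i : ℕ, i + 1 < α.card →
      {S : Finset V | α ⊆ S ∧ S ⊆ α ∪ β ∧ S.card = i + 1}.ncard = 0 := by
    intro i hi
    have he : {S : Finset V | α ⊆ S ∧ S ⊆ α ∪ β ∧ S.card = i + 1} = ∅ := by
      ext S
      simp only [Set.mem_setOf_eq, Set.mem_empty_iff_false, iff_false]
      rintro ⟨h1, _, h3⟩
      have := Finset.card_le_card h1
      omega
    rw [he, Set.ncard_empty]
  have hAzero : ∀ i : ℕ, i + 1 < β.card →
      {S : Finset V | β ⊆ S ∧ S ⊆ α ∪ β ∧ S.card = i + 1}.ncard = 0 := by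
    intro i hi
    have he : {S : Finset V | β ⊆ S ∧ S ⊆ α ∪ β ∧ S.card = i + 1} = ∅ := by
      ext S
      simp only [Set.mem_setOf_eq, Set.mem_empty_iff_false, iff_false]
      rintro ⟨h1, _, h3⟩
      have := Finset.card_le_card h1
      omega
    rw [he, Set.ncard_empty]
  have hRn : {S : Finset V | α ⊆ S ∧ S ⊆ α ∪ β ∧ S.card = n + 1}.ncard = h + 1 := by
    rw [hRcard n (by rw [hcα]; omega), hcα,
      show n + 1 - (n - h + 1) = h from by omega, Nat.choose_succ_self_right]
  have hAn : {S : Finset V | β ⊆ S ∧ S ⊆ α ∪ β ∧ S.card = n + 1}.ncard = n - h + 1 := by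
    rw [hAcard n (by rw [hcβ]; omega), hcβ,
      show n + 1 - (h + 1) = n - h from by omega, Nat.choose_succ_self_right]
  tfae_have 1 → 2 := fun H => H n le_rfl
  tfae_have 2 ↔ 4 := by
    have hc2 := hcount n le_rfl
    rw [hRn, hAn] at hc2
    constructor <;> intro he <;> omega
  tfae_have 3 ↔ 4 := by
    have hc3 := hcount (n - 1) (by omega)
    by_cases h0 : h = 0
    · subst h0
      rw [hRzero (n - 1) (by rw [hcα]; omega),
        hAcard (n - 1) (by rw [hcβ]; omega), hcβ] at hc3
      have hpos : 0 < (n - 0 + 1).choose (n - 1 + 1 - (0 + 1)) := Nat.choose_pos (by omega)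
      constructor <;> intro he <;> omega
    · by_cases hhn' : h = n
      · subst hhn'
        rw [hAzero (h - 1) (by rw [hcβ]; omega),
          hRcard (h - 1) (by rw [hcα]; omega), hcα] at hc3
        have hpos : 0 < (h + 1).choose (h - 1 + 1 - (h - h + 1)) := Nat.choose_pos (by omega)
        constructor <;> intro he <;> omega
      · have r := hRcard (n - 1) (by rw [hcα]; omega)
        have a := hAcard (n - 1) (by rw [hcβ]; omega)
        rw [hcα, show n - 1 + 1 - (n - h + 1) = h + 1 - 2 from by omega,
          Nat.choose_symm (by omega)] at r
        rw [hcβ, show n - 1 + 1 - (h + 1) = n - h + 1 - 2 from by omega,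
          Nat.choose_symm (by omega)] at a
        rw [r, a] at hc3
        constructor
        · intro he
          have hcc : (h + 1).choose 2 = (n - h + 1).choose 2 := by omega
          have := choose_two_inj (by omega) (by omega) hcc
          omega
        · intro he
          have hcc : (h + 1).choose 2 = (n - h + 1).choose 2 := by
            rw [show n - h + 1 = h + 1 from by omega]
          omega
  tfae_have 4 → 1 := by
    intro h4 i hi
    have hc := hcount i hi
    by_cases hih : h ≤ i
    · have r := hRcard i (by rw [hcα]; omega)
      have a := hAcard i (by rw [hcβ]; omega)
      rw [hcα] at r
      rw [hcβ] at a
      rw [show n - h + 1 = h + 1 from by omega] at r a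
      omega
    · have r := hRzero i (by rw [hcα]; omega)
      have a := hAzero i (by rw [hcβ]; omega)
      omega
  tfae_finish
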